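/- If δ ≠ 1, then ω(x,y,t) = e^{-νt/δ²}[a₁ cos(x/δ) + a₂ sin(x/δ)] + e^{-νt}[a₃ cos y + a₄ sin y] solves the deterministic 2D vorticity equation on D_δ for all t if and only if a₁ = a₂ = 0 or a₃ = a₄ = 0. -/

import Mathlib

/-- If `δ ≠ 1`, then
`ω(x,y,t) = e^{-νt/δ²}[a₁ cos(x/δ) + a₂ sin(x/δ)] + e^{-νt}[a₃ cos y + a₄ sin y]`
solves the deterministic 2D vorticity equation `∂_t ω = ν Δω − u·∇ω` (with `u` given by the
Biot–Savart law via the stream function `ψ = (−Δ)^{-1} ω`) for all `t`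
if and only if `a₁ = a₂ = 0` or `a₃ = a₄ = 0`. -/
theorem family_solves_iff_bar (δ ν a₁ a₂ a₃ a₄ : ℝ) (hδ : 0 < δ) (hδ1 : δ ≠ 1) (hν : 0 < ν)
    (ω ψ : ℝ → ℝ → ℝ → ℝ)
    (hω : ω = fun x y t =>
      Real.exp (-ν * t / δ ^ 2) * (a₁ * Real.cos (x / δ) + a₂ * Real.sin (x / δ))
        + Real.exp (-ν * t) * (a₃ * Real.cos y + a₄ * Real.sin y))
    (hψ : ψ = fun x y t =>
      δ ^ 2 * Real.exp (-ν * t / δ ^ 2) * (a₁ * Real.cos (x / δ) + a₂ * Real.sin (x / δ))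
        + Real.exp (-ν * t) * (a₃ * Real.cos y + a₄ * Real.sin y))
    (u₁ u₂ : ℝ → ℝ → ℝ → ℝ)
    (hu₁ : u₁ = fun x y t => deriv (fun b => ψ x b t) y)
    (hu₂ : u₂ = fun x y t => -(deriv (fun a => ψ a y t) x)) :
    (∀ x y t : ℝ,
      deriv (fun s => ω x y s) t =
        ν * (deriv (deriv (fun a => ω a y t)) x + deriv (deriv (fun b => ω x b t)) y)
          - (u₁ x y t * deriv (fun a => ω a y t) x
              + u₂ x y t * deriv (fun b => ω x b t) y))
      ↔ ((a₁ = 0 ∧ a₂ = 0) ∨ (a₃ = 0 ∧ a₄ = 0)) := by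
  have hδ0 : δ ≠ 0 := ne_of_gt hδ
  have hδ2 : δ ^ 2 ≠ 0 := pow_ne_zero _ hδ0
  have hδsq : δ ^ 2 ≠ 1 := by
    intro h
    apply hδ1
    nlinarith [sq_nonneg (δ - 1), sq_nonneg (δ + 1)]
  -- basic derivative facts
  have h1 : ∀ x : ℝ, HasDerivAt (fun a : ℝ => a / δ) (1 / δ) x := by
    intro x
    simpa using (hasDerivAt_id x).div_const δ
  have dA : ∀ x : ℝ, HasDerivAt (fun a => a₁ * Real.cos (a / δ) + a₂ * Real.sin (a / δ))
      ((a₂ * Real.cos (x / δ) - a₁ * Real.sin (x / δ)) / δ) x := by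
    intro x
    have := (((h1 x).cos).const_mul a₁).add (((h1 x).sin).const_mul a₂)
    refine this.congr_deriv ?_
    ring
  have dA2 : ∀ x : ℝ, HasDerivAt (fun a => (a₂ * Real.cos (a / δ) - a₁ * Real.sin (a / δ)) / δ)
      (-(a₁ * Real.cos (x / δ) + a₂ * Real.sin (x / δ)) / δ ^ 2) x := by
    intro x
    have := ((((h1 x).cos).const_mul a₂).sub (((h1 x).sin).const_mul a₁)).div_const δ
    refine this.congr_deriv ?_
    ring
  have dG : ∀ y : ℝ, HasDerivAt (fun b => a₃ * Real.cos b + a₄ * Real.sin b)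
      (a₄ * Real.cos y - a₃ * Real.sin y) y := by
    intro y
    have := ((Real.hasDerivAt_cos y).const_mul a₃).add ((Real.hasDerivAt_sin y).const_mul a₄)
    refine this.congr_deriv ?_
    ring
  have dG2 : ∀ y : ℝ, HasDerivAt (fun b => a₄ * Real.cos b - a₃ * Real.sin b)
      (-(a₃ * Real.cos y + a₄ * Real.sin y)) y := by
    intro y
    have := ((Real.hasDerivAt_cos y).const_mul a₄).sub ((Real.hasDerivAt_sin y).const_mul a₃)
    refine this.congr_deriv ?_
    ring
  have dE1 : ∀ t : ℝ, HasDerivAt (fun s : ℝ => Real.exp (-ν * s / δ ^ 2))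
      (Real.exp (-ν * t / δ ^ 2) * (-ν / δ ^ 2)) t := by
    intro t
    have h : HasDerivAt (fun s : ℝ => -ν * s / δ ^ 2) (-ν / δ ^ 2) t := by
      simpa using ((hasDerivAt_id t).const_mul (-ν)).div_const (δ ^ 2)
    exact h.exp
  have dE2 : ∀ t : ℝ, HasDerivAt (fun s : ℝ => Real.exp (-ν * s))
      (Real.exp (-ν * t) * (-ν)) t := by
    intro t
    have h : HasDerivAt (fun s : ℝ => -ν * s) (-ν) t := by
      simpa using (hasDerivAt_id t).const_mul (-ν)
    exact h.exp
  simp only [hω, hψ, hu₁, hu₂]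
  -- closed forms of all derivatives appearing in the equation
  have Dt : ∀ x y t : ℝ,
      deriv (fun s => Real.exp (-ν * s / δ ^ 2) * (a₁ * Real.cos (x / δ) + a₂ * Real.sin (x / δ))
        + Real.exp (-ν * s) * (a₃ * Real.cos y + a₄ * Real.sin y)) t
      = Real.exp (-ν * t / δ ^ 2) * (-ν / δ ^ 2) * (a₁ * Real.cos (x / δ) + a₂ * Real.sin (x / δ))
        + Real.exp (-ν * t) * (-ν) * (a₃ * Real.cos y + a₄ * Real.sin y) := by
    intro x y t
    exact (((dE1 t).mul_const _).add ((dE2 t).mul_const _)).deriv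
  have Dx : ∀ y t : ℝ,
      deriv (fun a => Real.exp (-ν * t / δ ^ 2) * (a₁ * Real.cos (a / δ) + a₂ * Real.sin (a / δ))
        + Real.exp (-ν * t) * (a₃ * Real.cos y + a₄ * Real.sin y))
      = fun x => Real.exp (-ν * t / δ ^ 2)
          * ((a₂ * Real.cos (x / δ) - a₁ * Real.sin (x / δ)) / δ) := by
    intro y t
    funext x
    exact (((dA x).const_mul _).add_const _).deriv
  have Dxx : ∀ x y t : ℝ,
      deriv (deriv (fun a => Real.exp (-ν * t / δ ^ 2)
          * (a₁ * Real.cos (a / δ) + a₂ * Real.sin (a / δ))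
        + Real.exp (-ν * t) * (a₃ * Real.cos y + a₄ * Real.sin y))) x
      = Real.exp (-ν * t / δ ^ 2)
          * (-(a₁ * Real.cos (x / δ) + a₂ * Real.sin (x / δ)) / δ ^ 2) := by
    intro x y t
    rw [Dx y t]
    exact ((dA2 x).const_mul _).deriv
  have Dy : ∀ x t : ℝ,
      deriv (fun b => Real.exp (-ν * t / δ ^ 2) * (a₁ * Real.cos (x / δ) + a₂ * Real.sin (x / δ))
        + Real.exp (-ν * t) * (a₃ * Real.cos b + a₄ * Real.sin b))
      = fun y => Real.exp (-ν * t) * (a₄ * Real.cos y - a₃ * Real.sin y) := by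
    intro x t
    funext y
    exact (((dG y).const_mul _).const_add _).deriv
  have Dyy : ∀ x y t : ℝ,
      deriv (deriv (fun b => Real.exp (-ν * t / δ ^ 2)
          * (a₁ * Real.cos (x / δ) + a₂ * Real.sin (x / δ))
        + Real.exp (-ν * t) * (a₃ * Real.cos b + a₄ * Real.sin b))) y
      = Real.exp (-ν * t) * (-(a₃ * Real.cos y + a₄ * Real.sin y)) := by
    intro x y t
    rw [Dy x t]
    exact ((dG2 y).const_mul _).deriv
  have DψY : ∀ x y t : ℝ,
      deriv (fun b => δ ^ 2 * Real.exp (-ν * t / δ ^ 2)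
          * (a₁ * Real.cos (x / δ) + a₂ * Real.sin (x / δ))
        + Real.exp (-ν * t) * (a₃ * Real.cos b + a₄ * Real.sin b)) y
      = Real.exp (-ν * t) * (a₄ * Real.cos y - a₃ * Real.sin y) := by
    intro x y t
    exact (((dG y).const_mul _).const_add _).deriv
  have DψX : ∀ x y t : ℝ,
      deriv (fun a => δ ^ 2 * Real.exp (-ν * t / δ ^ 2)
          * (a₁ * Real.cos (a / δ) + a₂ * Real.sin (a / δ))
        + Real.exp (-ν * t) * (a₃ * Real.cos y + a₄ * Real.sin y)) x
      = δ ^ 2 * Real.exp (-ν * t / δ ^ 2)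
          * ((a₂ * Real.cos (x / δ) - a₁ * Real.sin (x / δ)) / δ) := by
    intro x y t
    exact (((dA x).const_mul _).add_const _).deriv
  have DxPt : ∀ x y t : ℝ,
      deriv (fun a => Real.exp (-ν * t / δ ^ 2) * (a₁ * Real.cos (a / δ) + a₂ * Real.sin (a / δ))
        + Real.exp (-ν * t) * (a₃ * Real.cos y + a₄ * Real.sin y)) x
      = Real.exp (-ν * t / δ ^ 2)
          * ((a₂ * Real.cos (x / δ) - a₁ * Real.sin (x / δ)) / δ) := by
    intro x y t
    exact (((dA x).const_mul _).add_const _).deriv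
  have DyPt : ∀ x y t : ℝ,
      deriv (fun b => Real.exp (-ν * t / δ ^ 2) * (a₁ * Real.cos (x / δ) + a₂ * Real.sin (x / δ))
        + Real.exp (-ν * t) * (a₃ * Real.cos b + a₄ * Real.sin b)) y
      = Real.exp (-ν * t) * (a₄ * Real.cos y - a₃ * Real.sin y) := by
    intro x y t
    exact (((dG y).const_mul _).const_add _).deriv
  -- the equation at (x,y,t) is equivalent to f'(x) g'(y) = 0
  have key : ∀ x y t : ℝ,
      (deriv (fun s => Real.exp (-ν * s / δ ^ 2)
            * (a₁ * Real.cos (x / δ) + a₂ * Real.sin (x / δ))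
          + Real.exp (-ν * s) * (a₃ * Real.cos y + a₄ * Real.sin y)) t =
        ν * (deriv (deriv (fun a => Real.exp (-ν * t / δ ^ 2)
              * (a₁ * Real.cos (a / δ) + a₂ * Real.sin (a / δ))
            + Real.exp (-ν * t) * (a₃ * Real.cos y + a₄ * Real.sin y))) x
          + deriv (deriv (fun b => Real.exp (-ν * t / δ ^ 2)
              * (a₁ * Real.cos (x / δ) + a₂ * Real.sin (x / δ))
            + Real.exp (-ν * t) * (a₃ * Real.cos b + a₄ * Real.sin b))) y)
          - (deriv (fun b => δ ^ 2 * Real.exp (-ν * t / δ ^ 2)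
                * (a₁ * Real.cos (x / δ) + a₂ * Real.sin (x / δ))
              + Real.exp (-ν * t) * (a₃ * Real.cos b + a₄ * Real.sin b)) y
              * deriv (fun a => Real.exp (-ν * t / δ ^ 2)
                * (a₁ * Real.cos (a / δ) + a₂ * Real.sin (a / δ))
              + Real.exp (-ν * t) * (a₃ * Real.cos y + a₄ * Real.sin y)) x
            + -(deriv (fun a => δ ^ 2 * Real.exp (-ν * t / δ ^ 2)
                * (a₁ * Real.cos (a / δ) + a₂ * Real.sin (a / δ))
              + Real.exp (-ν * t) * (a₃ * Real.cos y + a₄ * Real.sin y)) x)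
              * deriv (fun b => Real.exp (-ν * t / δ ^ 2)
                * (a₁ * Real.cos (x / δ) + a₂ * Real.sin (x / δ))
              + Real.exp (-ν * t) * (a₃ * Real.cos b + a₄ * Real.sin b)) y))
      ↔ (a₂ * Real.cos (x / δ) - a₁ * Real.sin (x / δ))
          * (a₄ * Real.cos y - a₃ * Real.sin y) = 0 := by
    intro x y t
    rw [Dt, Dxx, Dyy, DψY, DψX, DxPt, DyPt]
    rw [← sub_eq_zero]
    have hrw : Real.exp (-ν * t / δ ^ 2) * (-ν / δ ^ 2)
          * (a₁ * Real.cos (x / δ) + a₂ * Real.sin (x / δ))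
        + Real.exp (-ν * t) * (-ν) * (a₃ * Real.cos y + a₄ * Real.sin y)
        - (ν * (Real.exp (-ν * t / δ ^ 2)
              * (-(a₁ * Real.cos (x / δ) + a₂ * Real.sin (x / δ)) / δ ^ 2)
            + Real.exp (-ν * t) * (-(a₃ * Real.cos y + a₄ * Real.sin y)))
          - (Real.exp (-ν * t) * (a₄ * Real.cos y - a₃ * Real.sin y)
              * (Real.exp (-ν * t / δ ^ 2)
                * ((a₂ * Real.cos (x / δ) - a₁ * Real.sin (x / δ)) / δ))
            + -(δ ^ 2 * Real.exp (-ν * t / δ ^ 2)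
                * ((a₂ * Real.cos (x / δ) - a₁ * Real.sin (x / δ)) / δ))
              * (Real.exp (-ν * t) * (a₄ * Real.cos y - a₃ * Real.sin y))))
        = ((1 - δ ^ 2) / δ) * (Real.exp (-ν * t / δ ^ 2) * Real.exp (-ν * t))
            * ((a₂ * Real.cos (x / δ) - a₁ * Real.sin (x / δ))
              * (a₄ * Real.cos y - a₃ * Real.sin y)) := by
      field_simp
      ring
    rw [hrw, mul_eq_zero, mul_eq_zero]
    have e1 : Real.exp (-ν * t / δ ^ 2) ≠ 0 := Real.exp_ne_zero _
    have e2 : Real.exp (-ν * t) ≠ 0 := Real.exp_ne_zero _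
    have hne : (1 - δ ^ 2) / δ ≠ 0 := by
      apply div_ne_zero _ hδ0
      intro h
      exact hδsq (by linarith)
    simp [e1, e2, hne]
  simp only [key]
  constructor
  · intro h
    by_cases h12 : a₁ = 0 ∧ a₂ = 0
    · exact Or.inl h12
    · right
      -- find x₀ with f'(x₀) ≠ 0
      obtain ⟨x₀, hx₀⟩ : ∃ x₀ : ℝ, a₂ * Real.cos (x₀ / δ) - a₁ * Real.sin (x₀ / δ) ≠ 0 := by
        by_cases h2 : a₂ = 0
        · have h1' : a₁ ≠ 0 := fun h1' => h12 ⟨h1', h2⟩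
          refine ⟨δ * (Real.pi / 2), ?_⟩
          rw [mul_div_cancel_left₀ _ hδ0, Real.cos_pi_div_two, Real.sin_pi_div_two]
          simpa [h2] using h1'
        · refine ⟨0, ?_⟩
          simpa using h2
      have hy : ∀ y : ℝ, a₄ * Real.cos y - a₃ * Real.sin y = 0 := by
        intro y
        have := h x₀ y 0
        rcases mul_eq_zero.mp this with h' | h'
        · exact absurd h' hx₀
        · exact h'
      have h4 : a₄ = 0 := by simpa using hy 0
      have h3 : a₃ = 0 := by
        have := hy (Real.pi / 2)
        rw [Real.cos_pi_div_two, Real.sin_pi_div_two] at this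
        linarith
      exact ⟨h3, h4⟩
  · rintro (⟨e1, e2⟩ | ⟨e3, e4⟩) x y t
    · simp [e1, e2]
    · simp [e3, e4]
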